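/- There exists a unique continuous linear operator T on the Hilbert space ℓ²(ℤ, ℂ) such that (Tf)(k) = f(k) − (f(k−1) + f(k+1))/2 for every f ∈ ℓ²(ℤ, ℂ) and every k ∈ ℤ, and the spectrum of T (as an operator on a complex Banach space) is exactly the image in ℂ of the real interval [0, 2], i.e., spectrum(T) = {z ∈ ℂ : z is real and 0 ≤ Re z ≤ 2}. -/

import Mathlib

noncomputable section LGL
open Complex
open scoped ENNReal

private abbrev Hsp := lp (fun _ : ℤ => ℂ) 2

private lemma memℓp_comp_equiv (e : ℤ ≃ ℤ) (f : ∀ _ : ℤ, ℂ) (hf : Memℓp f 2) :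
    Memℓp (fun k => f (e k)) 2 := by
  rw [memℓp_gen_iff (by norm_num)] at hf ⊢
  exact (e.summable_iff (f := fun k => ‖f k‖ ^ (2:ℝ≥0∞).toReal)).2 hf

private def shiftE : Hsp ≃ₗᵢ[ℂ] Hsp where
  toFun f := ⟨fun k => f (k + 1), memℓp_comp_equiv (Equiv.addRight 1) f (lp.memℓp f)⟩
  invFun f := ⟨fun k => f (k - 1), memℓp_comp_equiv (Equiv.subRight 1) f (lp.memℓp f)⟩
  map_add' f g := rfl
  map_smul' c f := rfl
  left_inv f := by ext k; simp
  right_inv f := by ext k; simp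
  norm_map' f := by
    rw [lp.norm_eq_tsum_rpow (by norm_num), lp.norm_eq_tsum_rpow (by norm_num)]
    congr 1
    exact (Equiv.addRight (1:ℤ)).tsum_eq (fun k => ‖(f : ∀ _ : ℤ, ℂ) k‖ ^ (2:ℝ≥0∞).toReal)

private def Uop : Hsp →L[ℂ] Hsp := shiftE.toLinearIsometry.toContinuousLinearMap
private def Dop : Hsp →L[ℂ] Hsp := shiftE.symm.toLinearIsometry.toContinuousLinearMap

private lemma Uop_apply (f : Hsp) (k : ℤ) : (Uop f : ∀ _ : ℤ, ℂ) k = (f : ∀ _ : ℤ, ℂ) (k + 1) := rfl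
private lemma Dop_apply (f : Hsp) (k : ℤ) : (Dop f : ∀ _ : ℤ, ℂ) k = (f : ∀ _ : ℤ, ℂ) (k - 1) := rfl

private def Tlap : Hsp →L[ℂ] Hsp := 1 - (2⁻¹ : ℂ) • (Uop + Dop)

private lemma Tlap_apply (f : Hsp) (k : ℤ) :
    (Tlap f : ∀ _ : ℤ, ℂ) k = (f : ∀ _ : ℤ, ℂ) k -
      ((f : ∀ _ : ℤ, ℂ) (k - 1) + (f : ∀ _ : ℤ, ℂ) (k + 1)) / 2 := by
  have : Tlap f = f - (2⁻¹ : ℂ) • (Uop f + Dop f) := by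
    simp [Tlap, ContinuousLinearMap.sub_apply, ContinuousLinearMap.smul_apply,
      ContinuousLinearMap.add_apply]
  rw [this]
  rw [lp.coeFn_sub, lp.coeFn_smul]
  simp only [Pi.sub_apply, Pi.smul_apply, lp.coeFn_add, Pi.add_apply, Uop_apply, Dop_apply,
    smul_eq_mul]
  ring

private lemma star_Uop : star Uop = Dop := by
  rw [ContinuousLinearMap.star_eq_adjoint]
  symm
  rw [ContinuousLinearMap.eq_adjoint_iff]
  intro x y
  rw [lp.inner_eq_tsum, lp.inner_eq_tsum]
  have := (Equiv.addRight (1:ℤ)).tsum_eq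
    (fun k => (y : ∀ _ : ℤ, ℂ) k * (starRingEnd ℂ) ((Dop x : ∀ _ : ℤ, ℂ) k))
  simp only [RCLike.inner_apply]
  rw [← this]
  congr 1
  funext k
  simp [Dop_apply, Uop_apply, Equiv.coe_addRight, add_sub_cancel_right]

private lemma isSelfAdjoint_Tlap : IsSelfAdjoint Tlap := by
  have hD : star Dop = Uop := by rw [← star_Uop, star_star]
  unfold IsSelfAdjoint Tlap
  rw [star_sub, star_one, star_smul, star_add, star_Uop, hD]
  norm_num [add_comm]

private lemma norm_Tlap_sub_one : ‖Tlap - 1‖ ≤ 1 := by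
  have : Tlap - 1 = -((2⁻¹ : ℂ) • (Uop + Dop)) := by unfold Tlap; abel
  rw [this, norm_neg, norm_smul (2⁻¹ : ℂ) (Uop + Dop)]
  have hU : ‖Uop‖ ≤ 1 := shiftE.toLinearIsometry.norm_toContinuousLinearMap_le
  have hD : ‖Dop‖ ≤ 1 := shiftE.symm.toLinearIsometry.norm_toContinuousLinearMap_le
  have := norm_add_le Uop Dop
  simp only [norm_inv]
  calc ‖(2:ℂ)‖⁻¹ * ‖Uop + Dop‖ ≤ ‖(2:ℂ)‖⁻¹ * 2 := by
        apply mul_le_mul_of_nonneg_left (by linarith) (by positivity)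
    _ = 1 := by norm_num

private instance : Nontrivial Hsp := by
  refine ⟨0, lp.single 2 0 1, fun h => ?_⟩
  have := congrArg (fun f : Hsp => (f : ∀ _ : ℤ, ℂ) 0) h
  simp [lp.single_apply_self] at this

set_option synthInstance.maxHeartbeats 400000 in
private lemma spectrum_Tlap_subset :
    spectrum ℂ Tlap ⊆ {z : ℂ | z.im = 0 ∧ 0 ≤ z.re ∧ z.re ≤ 2} := by
  intro z hz
  have him : z = (z.re : ℂ) := isSelfAdjoint_Tlap.mem_spectrum_eq_re hz
  have hmem : z - 1 ∈ spectrum ℂ (Tlap - algebraMap ℂ (Hsp →L[ℂ] Hsp) 1) := by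
    rw [← spectrum.sub_singleton_eq]
    exact Set.sub_mem_sub hz rfl
  rw [map_one] at hmem
  have hnorm : ‖z - 1‖ ≤ 1 := le_trans (spectrum.norm_le_norm_of_mem hmem) norm_Tlap_sub_one
  have h1 : ‖z - 1‖ ≤ 1 := hnorm
  have h2 : (z.re - 1)^2 ≤ 1 := by
    have := Complex.sq_norm (z - 1)
    have him0 : z.im = 0 := by rw [him]; simp
    have : Complex.normSq (z - 1) = (z.re - 1)^2 := by
      simp [Complex.normSq_apply, him0]; ring
    nlinarith [norm_nonneg (z - 1)]
  have him0 : z.im = 0 := by rw [him]; simp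
  refine ⟨him0, by nlinarith, by nlinarith⟩

noncomputable def cseq (θ : ℝ) (k : ℤ) : ℂ := Complex.exp (((θ * k : ℝ) : ℂ) * I)

lemma cseq_norm (θ : ℝ) (k : ℤ) : ‖cseq θ k‖ = 1 := Complex.norm_exp_ofReal_mul_I _

lemma cseq_key (θ : ℝ) (k : ℤ) :
    cseq θ (k - 1) + cseq θ (k + 1) = 2 * (Real.cos θ : ℂ) * cseq θ k := by
  unfold cseq
  have key : Complex.exp (((-θ : ℝ) : ℂ) * I) + Complex.exp (((θ : ℝ) : ℂ) * I)
      = 2 * (Real.cos θ : ℂ) := by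
    rw [Complex.exp_mul_I, Complex.exp_mul_I]
    push_cast
    rw [Complex.cos_neg, Complex.sin_neg, ← Complex.ofReal_cos]
    push_cast
    ring
  rw [show ((θ * ((k - 1 : ℤ) : ℝ) : ℝ) : ℂ) = ((θ * k : ℝ) : ℂ) + ((-θ : ℝ) : ℂ) by
        push_cast; ring,
      show ((θ * ((k + 1 : ℤ) : ℝ) : ℝ) : ℂ) = ((θ * k : ℝ) : ℂ) + ((θ : ℝ) : ℂ) by
        push_cast; ring,
      add_mul, add_mul, Complex.exp_add, Complex.exp_add, ← mul_add, key]
  ring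

private def weyl (θ : ℝ) (n : ℕ) : Hsp :=
  ⟨fun j => if -(n:ℤ) ≤ j ∧ j ≤ (n:ℤ) then cseq θ j else 0, by
    refine (memℓp_zero ?_).of_exponent_ge (by norm_num)
    refine ((Set.finite_Icc (-(n:ℤ)) (n:ℤ))).subset ?_
    intro j hj
    simp only [Set.mem_setOf_eq] at hj
    by_contra h
    rw [Set.mem_Icc] at h
    exact hj (if_neg h)⟩

private lemma weyl_apply (θ : ℝ) (n : ℕ) (j : ℤ) :
    (weyl θ n : ∀ _ : ℤ, ℂ) j = if -(n:ℤ) ≤ j ∧ j ≤ (n:ℤ) then cseq θ j else 0 := rfl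

private lemma weyl_norm_sq (θ : ℝ) (n : ℕ) : ‖weyl θ n‖ ^ (2:ℝ) = (2*n+1 : ℝ) := by
  have h := lp.norm_rpow_eq_tsum (p := 2) (by norm_num) (weyl θ n)
  rw [show ((2:ℝ≥0∞).toReal) = (2:ℝ) by simp] at h
  rw [h]
  have hzero : ∀ j ∉ Finset.Icc (-(n:ℤ)) (n:ℤ),
      ‖(weyl θ n : ∀ _ : ℤ, ℂ) j‖ ^ (2:ℝ) = 0 := by
    intro j hj
    rw [Finset.mem_Icc] at hj
    rw [weyl_apply, if_neg hj]
    simp [Real.rpow_two]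
  rw [tsum_eq_sum hzero]
  have hone : ∀ j ∈ Finset.Icc (-(n:ℤ)) (n:ℤ),
      ‖(weyl θ n : ∀ _ : ℤ, ℂ) j‖ ^ (2:ℝ) = 1 := by
    intro j hj
    rw [Finset.mem_Icc] at hj
    rw [weyl_apply, if_pos hj, cseq_norm]
    norm_num
  rw [Finset.sum_congr rfl hone, Finset.sum_const, Int.card_Icc]
  have : ((n:ℤ) + 1 - -(n:ℤ)).toNat = 2*n+1 := by omega
  rw [this]
  ring

set_option maxHeartbeats 1000000 in
private lemma spectrum_Tlap_superset :
    {z : ℂ | z.im = 0 ∧ 0 ≤ z.re ∧ z.re ≤ 2} ⊆ spectrum ℂ Tlap := by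
  rintro z ⟨him, h0, h2⟩
  set μ := z.re with hμ
  have hz : z = (μ : ℂ) := by
    rw [Complex.ext_iff]; constructor <;> simp [him, hμ]
  set θ := Real.arccos (1 - μ) with hθ
  have hcos : Real.cos θ = 1 - μ := Real.cos_arccos (by linarith) (by linarith)
  rw [spectrum.mem_iff]
  intro hunit
  obtain ⟨u, hu⟩ := hunit
  set C := ‖((u⁻¹ : (Hsp →L[ℂ] Hsp)ˣ) : Hsp →L[ℂ] Hsp)‖ with hC
  have hC0 : 0 ≤ C := norm_nonneg _
  have key : ∀ n : ℕ, 1 ≤ n → (2*n+1 : ℝ) ≤ C^2 := by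
    intro n hn
    set f := weyl θ n with hf
    set g := (algebraMap ℂ (Hsp →L[ℂ] Hsp) z - Tlap) f with hg
    set F : ℤ → ℂ := fun j => if -(n:ℤ) ≤ j ∧ j ≤ (n:ℤ) then cseq θ j else 0 with hFdef
    have hF : ∀ j : ℤ, (f : ∀ _ : ℤ, ℂ) j = F j := fun j => rfl
    have hco : ∀ j : ℤ, (g : ∀ _ : ℤ, ℂ) j =
        (F (j-1) + F (j+1))/2 - (Real.cos θ : ℂ) * F j := by
      intro j
      have : g = z • f - Tlap f := by
        rw [hg, ContinuousLinearMap.sub_apply, Algebra.algebraMap_eq_smul_one,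
          ContinuousLinearMap.smul_apply, ContinuousLinearMap.one_apply]
      rw [this, lp.coeFn_sub, lp.coeFn_smul]
      simp only [Pi.sub_apply, Pi.smul_apply, smul_eq_mul, Tlap_apply, hF]
      rw [hz]
      push_cast [hcos]
      ring
    have hn1 : (1:ℤ) ≤ (n:ℤ) := by exact_mod_cast hn
    have hgco : ∀ j : ℤ, (g : ∀ _ : ℤ, ℂ) j =
        if j = (n:ℤ)+1 then cseq θ (n:ℤ) / 2
        else if j = -((n:ℤ)+1) then cseq θ (-(n:ℤ)) / 2
        else if j = (n:ℤ) then -(cseq θ ((n:ℤ)+1)) / 2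
        else if j = -(n:ℤ) then -(cseq θ (-(n:ℤ)-1)) / 2
        else 0 := by
      intro j
      rw [hco]
      by_cases e1 : j = (n:ℤ)+1
      · subst e1
        rw [if_pos rfl, hFdef]
        simp only
        rw [if_pos (by omega : -(n:ℤ) ≤ (n:ℤ)+1-1 ∧ (n:ℤ)+1-1 ≤ (n:ℤ)),
            if_neg (by omega : ¬(-(n:ℤ) ≤ (n:ℤ)+1+1 ∧ (n:ℤ)+1+1 ≤ (n:ℤ))),
            if_neg (by omega : ¬(-(n:ℤ) ≤ (n:ℤ)+1 ∧ (n:ℤ)+1 ≤ (n:ℤ)))]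
        rw [show (n:ℤ)+1-1 = (n:ℤ) by ring]
        ring
      · rw [if_neg e1]
        by_cases e2 : j = -((n:ℤ)+1)
        · subst e2
          rw [if_pos rfl, hFdef]
          simp only
          rw [if_neg (by omega : ¬(-(n:ℤ) ≤ -((n:ℤ)+1)-1 ∧ -((n:ℤ)+1)-1 ≤ (n:ℤ))),
              if_pos (by omega : -(n:ℤ) ≤ -((n:ℤ)+1)+1 ∧ -((n:ℤ)+1)+1 ≤ (n:ℤ)),
              if_neg (by omega : ¬(-(n:ℤ) ≤ -((n:ℤ)+1) ∧ -((n:ℤ)+1) ≤ (n:ℤ)))]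
          rw [show -((n:ℤ)+1)+1 = -(n:ℤ) by ring]
          ring
        · rw [if_neg e2]
          by_cases e3 : j = (n:ℤ)
          · subst e3
            rw [if_pos rfl, hFdef]
            simp only
            rw [if_pos (by omega : -(n:ℤ) ≤ (n:ℤ)-1 ∧ (n:ℤ)-1 ≤ (n:ℤ)),
                if_neg (by omega : ¬(-(n:ℤ) ≤ (n:ℤ)+1 ∧ (n:ℤ)+1 ≤ (n:ℤ))),
                if_pos (by omega : -(n:ℤ) ≤ (n:ℤ) ∧ (n:ℤ) ≤ (n:ℤ))]
            linear_combination (cseq_key θ (n:ℤ)) / 2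
          · rw [if_neg e3]
            by_cases e4 : j = -(n:ℤ)
            · subst e4
              rw [if_pos rfl, hFdef]
              simp only
              rw [if_neg (by omega : ¬(-(n:ℤ) ≤ -(n:ℤ)-1 ∧ -(n:ℤ)-1 ≤ (n:ℤ))),
                  if_pos (by omega : -(n:ℤ) ≤ -(n:ℤ)+1 ∧ -(n:ℤ)+1 ≤ (n:ℤ)),
                  if_pos (by omega : -(n:ℤ) ≤ -(n:ℤ) ∧ -(n:ℤ) ≤ (n:ℤ))]
              linear_combination (cseq_key θ (-(n:ℤ))) / 2
            · rw [if_neg e4, hFdef]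
              simp only
              by_cases hin : -(n:ℤ) ≤ j ∧ j ≤ (n:ℤ)
              · rw [if_pos (by omega : -(n:ℤ) ≤ j-1 ∧ j-1 ≤ (n:ℤ)),
                    if_pos (by omega : -(n:ℤ) ≤ j+1 ∧ j+1 ≤ (n:ℤ)),
                    if_pos hin]
                linear_combination (cseq_key θ j) / 2
              · rw [if_neg (by omega : ¬(-(n:ℤ) ≤ j-1 ∧ j-1 ≤ (n:ℤ))),
                    if_neg (by omega : ¬(-(n:ℤ) ≤ j+1 ∧ j+1 ≤ (n:ℤ))),
                    if_neg hin]
                ring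
    -- bound on ‖g‖
    have hgn : ‖g‖ ≤ 1 := by
      have h := lp.norm_rpow_eq_tsum (p := 2) (by norm_num) g
      rw [show ((2:ℝ≥0∞).toReal) = (2:ℝ) by simp] at h
      set s : Finset ℤ := {(n:ℤ)+1, -((n:ℤ)+1), (n:ℤ), -(n:ℤ)} with hs
      have hzero : ∀ j ∉ s, ‖(g : ∀ _ : ℤ, ℂ) j‖ ^ (2:ℝ) = 0 := by
        intro j hj
        simp only [hs, Finset.mem_insert, Finset.mem_singleton, not_or] at hj
        obtain ⟨j1, j2, j3, j4⟩ := hj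
        rw [hgco, if_neg j1, if_neg j2, if_neg j3, if_neg j4]
        simp [Real.rpow_two]
      have hsum : ‖g‖ ^ (2:ℝ) = ∑ j ∈ s, ‖(g : ∀ _ : ℤ, ℂ) j‖ ^ (2:ℝ) := by
        rw [h, tsum_eq_sum hzero]
      have hbd : ∀ j ∈ s, ‖(g : ∀ _ : ℤ, ℂ) j‖ ^ (2:ℝ) ≤ 1/4 := by
        intro j _
        rw [hgco]
        have hq : ∀ m : ℤ, ‖cseq θ m / 2‖ ^ (2:ℝ) = 1/4 := by
          intro m
          rw [norm_div, cseq_norm, Real.rpow_two]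
          norm_num
        split_ifs with h1 h2 h3 h4
        · rw [hq]
        · rw [hq]
        · rw [norm_div, norm_neg, cseq_norm, Real.rpow_two]; norm_num
        · rw [norm_div, norm_neg, cseq_norm, Real.rpow_two]; norm_num
        · simp [Real.rpow_two]
      have hcard : (s.card : ℝ) ≤ 4 := by
        have h4 : s.card ≤ 4 := by
          apply le_trans (Finset.card_insert_le _ _)
          apply Nat.succ_le_succ
          apply le_trans (Finset.card_insert_le _ _)
          apply Nat.succ_le_succ
          apply le_trans (Finset.card_insert_le _ _)
          apply Nat.succ_le_succ
          simp
        exact_mod_cast h4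
      have hgsq : ‖g‖ ^ (2:ℝ) ≤ 1 := by
        rw [hsum]
        calc ∑ j ∈ s, ‖(g : ∀ _ : ℤ, ℂ) j‖ ^ (2:ℝ) ≤ ∑ _j ∈ s, (1/4 : ℝ) :=
              Finset.sum_le_sum hbd
          _ = s.card * (1/4) := by rw [Finset.sum_const]; ring
          _ ≤ 4 * (1/4) := by
              apply mul_le_mul_of_nonneg_right hcard; norm_num
          _ = 1 := by norm_num
      rw [Real.rpow_two] at hgsq
      nlinarith [norm_nonneg g]
    -- f recovered from g
    have hrec : f = (↑(u⁻¹) : Hsp →L[ℂ] Hsp) g := by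
      have h1 : ((↑(u⁻¹) : Hsp →L[ℂ] Hsp) * ↑u) f = f := by
        rw [← Units.val_mul, inv_mul_cancel]
        rfl
      rw [← h1, ContinuousLinearMap.mul_apply, hu, hg]
    have hfn : ‖f‖ ≤ C := by
      rw [hrec]
      calc ‖(↑(u⁻¹) : Hsp →L[ℂ] Hsp) g‖ ≤ C * ‖g‖ :=
            ContinuousLinearMap.le_opNorm _ g
        _ ≤ C * 1 := by apply mul_le_mul_of_nonneg_left hgn hC0
        _ = C := mul_one C
    have hfsq : ‖f‖ ^ (2:ℝ) = (2*n+1 : ℝ) := weyl_norm_sq θ n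
    rw [Real.rpow_two] at hfsq
    nlinarith [norm_nonneg f]
  obtain ⟨m, hm⟩ := exists_nat_gt (C^2)
  have := key (m+1) (Nat.le_add_left 1 m)
  push_cast at this
  linarith

end LGL

/-- There is a unique bounded operator `T` on `ℓ²(ℤ, ℂ)` with
`(Tf)(k) = f(k) − (f(k−1) + f(k+1))/2`, and its spectrum is exactly the image in `ℂ` of the
real interval `[0, 2]`. -/
theorem line_graph_laplacian_spectrum :
    ∃! T : lp (fun _ : ℤ => ℂ) 2 →L[ℂ] lp (fun _ : ℤ => ℂ) 2,
      (∀ f : lp (fun _ : ℤ => ℂ) 2, ∀ k : ℤ,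
        (T f : ∀ _ : ℤ, ℂ) k = (f : ∀ _ : ℤ, ℂ) k -
          ((f : ∀ _ : ℤ, ℂ) (k - 1) + (f : ∀ _ : ℤ, ℂ) (k + 1)) / 2) ∧
      spectrum ℂ T = {z : ℂ | z.im = 0 ∧ 0 ≤ z.re ∧ z.re ≤ 2} := by
  refine ⟨Tlap, ⟨Tlap_apply, le_antisymm spectrum_Tlap_subset spectrum_Tlap_superset⟩, ?_⟩
  rintro T' ⟨hT', -⟩
  ext f : 1
  apply lp.ext
  funext k
  rw [hT' f k, Tlap_apply]
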